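/- For a nonnegative bounded operator S on H and a closed subspace K, the shorted operator S_K vanishes if and only if ran(S^{1/2}) ∩ K = {0}. -/

import Mathlib

open ContinuousLinearMap

variable {H : Type*} [NormedAddCommGroup H] [InnerProductSpace ℂ H] [CompleteSpace H]

/-- `W` is the Kreĭn shorted operator of `S` with respect to the closed subspace `K`. -/
def IsShortedOp (S W : H →L[ℂ] H) (K : Submodule ℂ H) : Prop :=
  IsSelfAdjoint W ∧
    ∀ f : H, (inner ℂ (W f) f : ℂ).re = ⨅ φ : Kᗮ, (inner ℂ (S (f + φ)) (f + φ) : ℂ).re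

/-- For `S ≥ 0` with positive square root `R = S^{1/2}` and a closed
subspace `K`, the shorted operator `S_K` vanishes iff `ran(S^{1/2}) ∩ K = {0}`. -/
theorem shorted_eq_zero_iff (S R : H →L[ℂ] H)
    (hS : S.IsPositive) (hR : R.IsPositive) (hR2 : R ∘L R = S)
    (K : Submodule ℂ H) (hK : IsClosed (K : Set H))
    (W : H →L[ℂ] H) (hW : IsShortedOp S W K) :
    W = 0 ↔ LinearMap.range (R : H →ₗ[ℂ] H) ⊓ K = ⊥ := by
  classical
  haveI : CompleteSpace K := hK.completeSpace_coe
  obtain ⟨hWsa, hWinf⟩ := hW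
  have hsym : ∀ a b : H, (inner ℂ (R a) b : ℂ) = inner ℂ a (R b) := fun a b => hR.1 a b
  -- re ⟪S g, g⟫ = ‖R g‖ ^ 2
  have hSg : ∀ g : H, (inner ℂ (S g) g : ℂ).re = ‖R g‖ ^ 2 := by
    intro g
    rw [← hR2]
    simp only [comp_apply]
    rw [show (inner ℂ (R (R g)) g : ℂ) = inner ℂ (R g) (R g) from hsym (R g) g]
    simpa using inner_self_eq_norm_sq (𝕜 := ℂ) (R g)
  set M : Submodule ℂ H := ((Kᗮ).map (R : H →ₗ[ℂ] H)).topologicalClosure with hMdef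
  -- Mᗮ = R⁻¹ K
  have hMperp : ∀ x : H, x ∈ Mᗮ ↔ R x ∈ K := by
    intro x
    have h1 : x ∈ Mᗮ ↔ x ∈ ((Kᗮ).map (R : H →ₗ[ℂ] H))ᗮ := by
      constructor
      · intro hx y hy
        exact hx y (Submodule.le_topologicalClosure _ hy)
      · intro hx y hy
        have hyc : y ∈ closure (((Kᗮ).map (R : H →ₗ[ℂ] H)) : Set H) := by
          rwa [← Submodule.topologicalClosure_coe]
        obtain ⟨u, hu, hulim⟩ := mem_closure_iff_seq_limit.mp hyc
        have hlim : Filter.Tendsto (fun n => (inner ℂ (u n) x : ℂ)) Filter.atTop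
            (nhds (inner ℂ y x)) := Filter.Tendsto.inner hulim tendsto_const_nhds
        have hzero : (fun n => (inner ℂ (u n) x : ℂ)) = fun _ => 0 := by
          funext n; exact hx (u n) (hu n)
        rw [hzero] at hlim
        exact tendsto_nhds_unique hlim tendsto_const_nhds
    rw [h1]
    constructor
    · intro hx
      have hmem : R x ∈ Kᗮᗮ := by
        intro φ hφ
        have h := hx (R φ) ⟨φ, hφ, rfl⟩
        rwa [hsym φ x] at h
      rwa [Submodule.orthogonal_orthogonal K] at hmem
    · rintro hx y ⟨φ, hφ, rfl⟩
      have h : (inner ℂ (φ : H) (R x) : ℂ) = 0 :=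
        Submodule.inner_left_of_mem_orthogonal hx hφ
      rw [show ((R : H →ₗ[ℂ] H) φ : H) = R φ from rfl, hsym φ x]
      exact h
  -- membership in M iff the infimum is zero
  have hinf_iff : ∀ f : H,
      ((⨅ φ : Kᗮ, (inner ℂ (S (f + φ)) (f + φ) : ℂ).re) = 0) ↔ R f ∈ M := by
    intro f
    have hbdd : BddBelow (Set.range fun φ : Kᗮ => (inner ℂ (S (f + φ)) (f + φ) : ℂ).re) := by
      refine ⟨0, ?_⟩
      rintro r ⟨φ, rfl⟩
      dsimp only
      rw [hSg]
      positivity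
    constructor
    · intro h0
      have hm : R f ∈ closure (((Kᗮ).map (R : H →ₗ[ℂ] H)) : Set H) := by
        rw [Metric.mem_closure_iff]
        intro ε hε
        by_contra hcon
        push_neg at hcon
        have hlow : ∀ φ : Kᗮ, ε ^ 2 ≤ (inner ℂ (S (f + φ)) (f + φ) : ℂ).re := by
          intro φ
          rw [hSg]
          have h1 : ε ≤ ‖R f - R (-(φ : H))‖ := by
            have h2 := hcon (R (-(φ : H))) ⟨-(φ : H), neg_mem φ.2, rfl⟩
            rwa [dist_eq_norm] at h2
          have h2 : ε ≤ ‖R (f + φ)‖ := by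
            rw [map_add]
            calc ε ≤ ‖R f - R (-(φ : H))‖ := h1
              _ = ‖R f + R (φ : H)‖ := by rw [map_neg, sub_neg_eq_add]
          exact pow_le_pow_left₀ hε.le h2 2
        have hle : ε ^ 2 ≤ (0 : ℝ) := h0 ▸ le_ciInf hlow
        nlinarith
      rwa [← Submodule.topologicalClosure_coe] at hm
    · intro hm
      refine le_antisymm ?_ (le_ciInf fun φ => by rw [hSg]; positivity)
      refine le_of_forall_pos_le_add fun ε hε => ?_
      have hm' : R f ∈ closure (((Kᗮ).map (R : H →ₗ[ℂ] H)) : Set H) := by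
        rwa [← Submodule.topologicalClosure_coe]
      obtain ⟨b, hb, hdist⟩ := Metric.mem_closure_iff.mp hm' (Real.sqrt ε)
        (Real.sqrt_pos.mpr hε)
      obtain ⟨φ, hφ, rfl⟩ := hb
      have hval : (inner ℂ (S (f + ((⟨-φ, neg_mem hφ⟩ : Kᗮ) : H)))
          (f + ((⟨-φ, neg_mem hφ⟩ : Kᗮ) : H)) : ℂ).re < ε := by
        rw [hSg]
        have h1 : ‖R (f + -φ)‖ < Real.sqrt ε := by
          rw [map_add, map_neg, ← sub_eq_add_neg, ← dist_eq_norm]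
          exact hdist
        calc ‖R (f + -φ)‖ ^ 2 < Real.sqrt ε ^ 2 :=
              pow_lt_pow_left₀ h1 (norm_nonneg _) (by norm_num)
          _ = ε := Real.sq_sqrt hε.le
      calc (⨅ φ : Kᗮ, (inner ℂ (S (f + φ)) (f + φ) : ℂ).re)
          ≤ _ := ciInf_le hbdd (⟨-φ, neg_mem hφ⟩ : Kᗮ)
        _ ≤ ε := hval.le
        _ = 0 + ε := by ring
  constructor
  · -- W = 0 → range R ⊓ K = ⊥
    intro hW0
    have hA : ∀ f : H, R f ∈ M := by
      intro f
      refine (hinf_iff f).mp ?_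
      have h := hWinf f
      rw [hW0] at h
      simpa using h.symm
    rw [eq_bot_iff]
    rintro x ⟨⟨g, rfl⟩, hxK⟩
    have hg : g ∈ Mᗮ := (hMperp g).mpr hxK
    have hz : ∀ f : H, (inner ℂ f (R g) : ℂ) = 0 := by
      intro f
      rw [← hsym f g]
      exact hg (R f) (hA f)
    have : (inner ℂ (R g) (R g) : ℂ) = 0 := hz (R g)
    simpa using inner_self_eq_zero.mp this
  · -- range R ⊓ K = ⊥ → W = 0
    intro hB
    have hker : ∀ x : H, x ∈ Mᗮ → R x = 0 := by
      intro x hx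
      have hx' : R x ∈ LinearMap.range (R : H →ₗ[ℂ] H) ⊓ K := ⟨⟨x, rfl⟩, (hMperp x).mp hx⟩
      rw [hB] at hx'
      exact hx'
    have hA : ∀ f : H, R f ∈ M := by
      intro f
      haveI : CompleteSpace M :=
        (Submodule.isClosed_topologicalClosure _).completeSpace_coe
      obtain ⟨m, hm, n, hn, hRf⟩ := M.exists_add_mem_mem_orthogonal (R f)
      have hninner : (inner ℂ n n : ℂ) = 0 := by
        have h1 : (inner ℂ (R f) n : ℂ) = 0 := by
          rw [hsym f n, hker n hn]
          simp
        have h2 : (inner ℂ m n : ℂ) = 0 := hn m hm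
        calc (inner ℂ n n : ℂ) = inner ℂ (R f - m) n := by
              rw [hRf, add_sub_cancel_left]
          _ = inner ℂ (R f) n - inner ℂ m n := by rw [inner_sub_left]
          _ = 0 := by rw [h1, h2, sub_zero]
      have hn0 : n = 0 := inner_self_eq_zero.mp hninner
      rw [hRf, hn0, add_zero]
      exact hm
    have hsymW : ∀ a b : H, (inner ℂ (W a) b : ℂ) = inner ℂ a (W b) :=
      fun a b => hWsa.isSymmetric a b
    have hWf : ∀ f : H, (inner ℂ (W f) f : ℂ) = 0 := by
      intro f
      have hre : (inner ℂ (W f) f : ℂ).re = 0 := by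
        rw [hWinf f]
        exact (hinf_iff f).mpr (hA f)
      have hreal : (starRingEnd ℂ) (inner ℂ (W f) f : ℂ) = inner ℂ (W f) f := by
        rw [inner_conj_symm]
        exact (hsymW f f).symm
      have him : (inner ℂ (W f) f : ℂ).im = 0 := by
        have h := congrArg Complex.im hreal
        rw [Complex.conj_im] at h
        linarith
      exact Complex.ext hre him
    have hcoe : (W : H →ₗ[ℂ] H) = 0 := (inner_map_self_eq_zero _).mp hWf
    ext x
    exact LinearMap.congr_fun hcoe x
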